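/- In the 5-dimensional Lie group example, the fundamental tensor F(x,y,z) = g((∇ₓφ)y, z) has nonzero components (up to its symmetries) only F₁₁₅ = -F₂₂₅ = -F₃₃₅ = F₄₄₅ = λ₃, F₁₃₅ = -F₂₄₅ = λ₁, F₁₄₅ = F₂₃₅ = ½(λ₂+μ₁), F₁₂₅ = -F₃₄₅ = ½(λ₄+μ₃), where Fᵢⱼ₅ = F(eᵢ, eⱼ, ξ). In particular F(ξ, y, z) = 0 for all y, z, and F(x,y,ξ) is symmetric in x, y and satisfies F(x,y,ξ) = -F(φx, φy, ξ) on span(e₁,…,e₄). -/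
import Mathlib


open Finset

noncomputable section

/-- The standard basis of ℝ⁵; `e 4` plays the role of ξ. -/
def e (i : Fin 5) : Fin 5 → ℝ := Pi.single i 1

/-- The Reeb vector ξ = e₅. -/
def xi : Fin 5 → ℝ := e 4

/-- The contact form η, dual to ξ. -/
def eta (x : Fin 5 → ℝ) : ℝ := x 4

/-- The structure endomorphism: φe₁ = e₃, φe₂ = e₄, φe₃ = -e₁, φe₄ = -e₂, φξ = 0. -/
def phi (x : Fin 5 → ℝ) : Fin 5 → ℝ := ![-(x 2), -(x 3), x 0, x 1, 0]

/-- The B-metric g = diag(1,1,-1,-1,1). -/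
def gf (x y : Fin 5 → ℝ) : ℝ := x 0 * y 0 + x 1 * y 1 - x 2 * y 2 - x 3 * y 3 + x 4 * y 4

/-- The signs εᵢ = g(eᵢ,eᵢ). -/
def eps : Fin 5 → ℝ := ![1, 1, -1, -1, 1]

/-- The operator x ↦ [x, ξ] on span(e₁,…,e₄), determined by the paper's commutators. -/
def D (l1 l2 l3 l4 m1 m3 : ℝ) (x : Fin 5 → ℝ) : Fin 5 → ℝ :=
  ![l1 * x 0 + m1 * x 1 - l3 * x 2 - m3 * x 3,
    l2 * x 0 - l1 * x 1 - l4 * x 2 + l3 * x 3,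
    l3 * x 0 + m3 * x 1 + l1 * x 2 + m1 * x 3,
    l4 * x 0 - l3 * x 1 + l2 * x 2 - l1 * x 3,
    0]

/-- The Lie bracket: span(e₁,…,e₄) is abelian, [x,ξ] = D x, extended bilinearly and
antisymmetrically. -/
def br (l1 l2 l3 l4 m1 m3 : ℝ) (x y : Fin 5 → ℝ) : Fin 5 → ℝ :=
  y 4 • D l1 l2 l3 l4 m1 m3 x - x 4 • D l1 l2 l3 l4 m1 m3 y

/-- The Levi-Civita connection via the Koszul formula
2g(∇ₓy, z) = g([x,y],z) + g([z,x],y) + g([z,y],x), recovered componentwise in the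
orthogonal basis. -/
def nabla (l1 l2 l3 l4 m1 m3 : ℝ) (x y : Fin 5 → ℝ) : Fin 5 → ℝ :=
  fun i => eps i * ((gf (br l1 l2 l3 l4 m1 m3 x y) (e i)
    + gf (br l1 l2 l3 l4 m1 m3 (e i) x) y
    + gf (br l1 l2 l3 l4 m1 m3 (e i) y) x) / 2)

/-- The curvature tensor R(x,y)z = ∇ₓ∇_y z - ∇_y∇ₓ z - ∇_{[x,y]} z. -/
def Rc (l1 l2 l3 l4 m1 m3 : ℝ) (x y z : Fin 5 → ℝ) : Fin 5 → ℝ :=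
  nabla l1 l2 l3 l4 m1 m3 x (nabla l1 l2 l3 l4 m1 m3 y z)
    - nabla l1 l2 l3 l4 m1 m3 y (nabla l1 l2 l3 l4 m1 m3 x z)
    - nabla l1 l2 l3 l4 m1 m3 (br l1 l2 l3 l4 m1 m3 x y) z

/-- The Ricci tensor ρ(y,z) = Σᵢ εᵢ g(R(eᵢ,y)z, eᵢ). -/
def rho (l1 l2 l3 l4 m1 m3 : ℝ) (y z : Fin 5 → ℝ) : ℝ :=
  ∑ i : Fin 5, eps i * gf (Rc l1 l2 l3 l4 m1 m3 (e i) y z) (e i)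

/-- The scalar curvature τ = Σⱼ εⱼ ρ(eⱼ,eⱼ). -/
def tau (l1 l2 l3 l4 m1 m3 : ℝ) : ℝ :=
  ∑ j : Fin 5, eps j * rho l1 l2 l3 l4 m1 m3 (e j) (e j)

/-- The associated Ricci tensor ρ*(y,z) = Σᵢ εᵢ g(R(eᵢ,y)z, φeᵢ). -/
def rhoStar (l1 l2 l3 l4 m1 m3 : ℝ) (y z : Fin 5 → ℝ) : ℝ :=
  ∑ i : Fin 5, eps i * gf (Rc l1 l2 l3 l4 m1 m3 (e i) y z) (phi (e i))

/-- The associated scalar curvature τ* = Σⱼ εⱼ ρ*(eⱼ,eⱼ). -/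
def tauStar (l1 l2 l3 l4 m1 m3 : ℝ) : ℝ :=
  ∑ j : Fin 5, eps j * rhoStar l1 l2 l3 l4 m1 m3 (e j) (e j)

/-- The fundamental tensor F(x,y,z) = g((∇ₓφ)y, z) = g(∇ₓ(φy) - φ(∇ₓy), z). -/
def Ften (l1 l2 l3 l4 m1 m3 : ℝ) (x y z : Fin 5 → ℝ) : ℝ :=
  gf (nabla l1 l2 l3 l4 m1 m3 x (phi y) - phi (nabla l1 l2 l3 l4 m1 m3 x y)) z

/-- The square norm ‖∇φ‖² = Σᵢₖ εᵢ εₖ g((∇_{eᵢ}φ)eₖ, (∇_{eᵢ}φ)eₖ). -/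
def snPhi (l1 l2 l3 l4 m1 m3 : ℝ) : ℝ :=
  ∑ i : Fin 5, ∑ k : Fin 5, eps i * eps k *
    gf (nabla l1 l2 l3 l4 m1 m3 (e i) (phi (e k)) - phi (nabla l1 l2 l3 l4 m1 m3 (e i) (e k)))
       (nabla l1 l2 l3 l4 m1 m3 (e i) (phi (e k)) - phi (nabla l1 l2 l3 l4 m1 m3 (e i) (e k)))

lemma Ften_horiz_zero (l1 l2 l3 l4 m1 m3 : ℝ) (x y z : Fin 5 → ℝ)
    (hx : x 4 = 0) (hy : y 4 = 0) (hz : z 4 = 0) :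
    Ften l1 l2 l3 l4 m1 m3 x y z = 0 := by
  simp [Ften, nabla, gf, br, D, e, phi, eps, Pi.single_apply, hx, hy, hz]

lemma e_castSucc_four (i : Fin 4) : e i.castSucc 4 = 0 := by
  have h : (4 : Fin 5) ≠ i.castSucc := (Fin.castSucc_lt_last i).ne'
  simp [e, Pi.single_apply, h]

set_option maxHeartbeats 4000000 in
/-- The nonzero components of F are exactly the listed Fᵢⱼ₅, and
F(ξ,·,·) = 0, F(·,·,ξ) is symmetric and satisfies F(φx,φy,ξ) = -F(x,y,ξ). -/
theorem stmt14 (l1 l2 l3 l4 m1 m3 : ℝ) :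
    Ften l1 l2 l3 l4 m1 m3 (e 0) (e 0) xi = l3 ∧
    Ften l1 l2 l3 l4 m1 m3 (e 1) (e 1) xi = -l3 ∧
    Ften l1 l2 l3 l4 m1 m3 (e 2) (e 2) xi = -l3 ∧
    Ften l1 l2 l3 l4 m1 m3 (e 3) (e 3) xi = l3 ∧
    Ften l1 l2 l3 l4 m1 m3 (e 0) (e 2) xi = l1 ∧
    Ften l1 l2 l3 l4 m1 m3 (e 1) (e 3) xi = -l1 ∧
    Ften l1 l2 l3 l4 m1 m3 (e 0) (e 3) xi = (l2 + m1) / 2 ∧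
    Ften l1 l2 l3 l4 m1 m3 (e 1) (e 2) xi = (l2 + m1) / 2 ∧
    Ften l1 l2 l3 l4 m1 m3 (e 0) (e 1) xi = (l4 + m3) / 2 ∧
    Ften l1 l2 l3 l4 m1 m3 (e 2) (e 3) xi = -((l4 + m3) / 2) ∧
    (∀ y z : Fin 5 → ℝ, Ften l1 l2 l3 l4 m1 m3 xi y z = 0) ∧
    (∀ x y : Fin 5 → ℝ, Ften l1 l2 l3 l4 m1 m3 x y xi = Ften l1 l2 l3 l4 m1 m3 y x xi) ∧
    (∀ x y : Fin 5 → ℝ, eta x = 0 → eta y = 0 →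
      Ften l1 l2 l3 l4 m1 m3 (phi x) (phi y) xi = -Ften l1 l2 l3 l4 m1 m3 x y xi) ∧
    (∀ i j k : Fin 4,
      Ften l1 l2 l3 l4 m1 m3 (e i.castSucc) (e j.castSucc) (e k.castSucc) = 0) := by
  
  refine ⟨?_, ?_, ?_, ?_, ?_, ?_, ?_, ?_, ?_, ?_, ?_, ?_, ?_, ?_⟩
  · simp [Ften, nabla, gf, br, D, e, phi, eps, xi, Pi.single_apply]
  · simp [Ften, nabla, gf, br, D, e, phi, eps, xi, Pi.single_apply]
  · simp [Ften, nabla, gf, br, D, e, phi, eps, xi, Pi.single_apply]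
  · simp [Ften, nabla, gf, br, D, e, phi, eps, xi, Pi.single_apply]
  · simp [Ften, nabla, gf, br, D, e, phi, eps, xi, Pi.single_apply]
  · simp [Ften, nabla, gf, br, D, e, phi, eps, xi, Pi.single_apply]
  · simp [Ften, nabla, gf, br, D, e, phi, eps, xi, Pi.single_apply]; try ring
  · simp [Ften, nabla, gf, br, D, e, phi, eps, xi, Pi.single_apply]; try ring
  · simp [Ften, nabla, gf, br, D, e, phi, eps, xi, Pi.single_apply]; try ring
  · simp [Ften, nabla, gf, br, D, e, phi, eps, xi, Pi.single_apply]; try ring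
  · intro y z
    simp [Ften, nabla, gf, br, D, e, phi, eps, xi, Pi.single_apply]
    try ring
  · intro x y
    simp [Ften, nabla, gf, br, D, e, phi, eps, xi, Pi.single_apply]
    try ring
  · intro x y hx hy
    simp only [eta] at hx hy
    simp [Ften, nabla, gf, br, D, e, phi, eps, xi, Pi.single_apply, hx, hy]
    try ring
  · intro i j k
    exact Ften_horiz_zero _ _ _ _ _ _ _ _ _ (e_castSucc_four i) (e_castSucc_four j)
      (e_castSucc_four k)
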